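/- Assume the Continuum Hypothesis. Then the group G is generated by a subspace X ⊆ G having the Menger property Ufin(O,O). -/

import Mathlib

open Set Filter Topology

/-- `c` is an open cover of the space `X`. -/
def IsOpenCover {X : Type*} [TopologicalSpace X] (c : Set (Set X)) : Prop :=
  (∀ U ∈ c, IsOpen U) ∧ ⋃₀ c = Set.univ

/-- The Menger property `Ufin(O,O)`. -/
def MengerProp (X : Type*) [TopologicalSpace X] : Prop :=
  ∀ c : ℕ → Set (Set X), (∀ n, IsOpenCover (c n)) →
    ∃ v : ℕ → Set (Set X), (∀ n, v n ⊆ c n ∧ (v n).Finite) ∧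
      ∀ x : X, ∃ n : ℕ, x ∈ ⋃₀ v n

/-- The group `G ≤ {0,1}^(ℕ×ℕ)`. -/
def Gset : Set ((ℕ × ℕ) → ZMod 2) :=
  {x | ∀ j : ℕ, {i : ℕ | x (i, j) ≠ 0}.Finite}

/-- `g` is a finite sum of elements of `X`. -/
def IsFiniteSumOf (X : Set ((ℕ × ℕ) → ZMod 2)) (g : (ℕ × ℕ) → ZMod 2) : Prop :=
  ∃ l : List ((ℕ × ℕ) → ZMod 2), (∀ a ∈ l, a ∈ X) ∧ l.sum = g

/-- `X` generates the group `G`. -/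
def GeneratesG (X : Set ((ℕ × ℕ) → ZMod 2)) : Prop :=
  ∀ g ∈ Gset, IsFiniteSumOf X g

/- ----------------- auxiliary development ----------------- -/

noncomputable section Aux

abbrev EE : Type := (ℕ × ℕ) → ZMod 2

/-- The countable set of finitely supported elements. -/
def Qset : Set EE := {x : EE | {p : ℕ × ℕ | x p ≠ 0}.Finite}

lemma zmod2_add_self (a : ZMod 2) : a + a = 0 := by revert a; decide

lemma EE_add_self (x : EE) : x + x = 0 := by
  funext p; exact zmod2_add_self (x p)

lemma zero_mem_Gset : (0 : EE) ∈ Gset := by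
  intro j
  convert Set.finite_empty
  ext i
  simp [Pi.zero_apply]

lemma Qset_subset_Gset : Qset ⊆ Gset := by
  intro x hx j
  apply (hx.image Prod.fst).subset
  intro i hi
  exact ⟨(i, j), hi, rfl⟩

lemma add_mem_Gset {a b : EE} (ha : a ∈ Gset) (hb : b ∈ Gset) : a + b ∈ Gset := by
  intro j
  apply ((ha j).union (hb j)).subset
  intro i hi
  by_cases h : a (i, j) = 0
  · right
    intro hbz
    apply hi
    show a (i, j) + b (i, j) = 0
    rw [h, hbz, add_zero]
  · exact Or.inl h

lemma finite_supp_in (s : Finset (ℕ × ℕ)) : {x : EE | ∀ p, x p ≠ 0 → p ∈ s}.Finite := by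
  classical
  have hinj : Set.InjOn (fun x : EE => (fun p : s => x ↑p)) {x : EE | ∀ p, x p ≠ 0 → p ∈ s} := by
    intro x hx y hy hxy
    funext p
    by_cases hp : p ∈ s
    · exact congrFun hxy ⟨p, hp⟩
    · have hx0 : x p = 0 := by by_contra h; exact hp (hx p h)
      have hy0 : y p = 0 := by by_contra h; exact hp (hy p h)
      rw [hx0, hy0]
  exact Set.Finite.of_finite_image (Set.toFinite _) hinj

lemma Qset_countable : Qset.Countable := by
  have hsub : Qset ⊆ ⋃ s : Finset (ℕ × ℕ), {x : EE | ∀ p, x p ≠ 0 → p ∈ s} := by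
    intro x hx
    exact Set.mem_iUnion.mpr ⟨hx.toFinset, fun p hp => hx.mem_toFinset.mpr hp⟩
  exact (Set.countable_iUnion fun s => (finite_supp_in s).countable).mono hsub

/-- Key Baire-category lemma: given `g ∈ G` and countably many closed sets missing `Qset`,
there is `z ∈ G` with `g + z ∈ G` such that both `z` and `g + z` avoid all the closed sets. -/
lemma core_avoid (g : EE) (hg : g ∈ Gset) (S : Set (Set EE)) (hSc : S.Countable)
    (hS : ∀ C ∈ S, IsClosed C ∧ C ∩ Qset = ∅) :
    ∃ z, z ∈ Gset ∧ g + z ∈ Gset ∧ ∀ C ∈ S, z ∉ C ∧ g + z ∉ C := by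
  classical
  set K : Set EE := {z : EE | ∀ p, g p = 0 → z p = 0} with hK
  have hKcl : IsClosed K := by
    have : K = ⋂ p ∈ {q : ℕ × ℕ | g q = 0}, {z : EE | z p = 0} := by
      ext z
      simp only [hK, Set.mem_setOf_eq, Set.mem_iInter]
    rw [this]
    exact isClosed_biInter fun p _ => isClosed_eq (continuous_apply p) continuous_const
  haveI : CompactSpace K := isCompact_iff_compactSpace.mp hKcl.isCompact
  have hgK : g ∈ K := fun p hp => hp
  have h0K : (0 : EE) ∈ K := fun p _ => rfl
  haveI : Nonempty K := ⟨⟨g, hgK⟩⟩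
  -- density of translated avoidance sets
  have dense_avoid : ∀ h0, h0 ∈ K → ∀ C ∈ S, Dense {z : K | h0 + (z : EE) ∉ C} := by
    intro h0 hh0 C hC
    rw [dense_iff_inter_open]
    rintro U hU ⟨z₀, hz₀U⟩
    rcases isOpen_induced_iff.mp hU with ⟨V, hV, rfl⟩
    have hz₀V : (z₀ : EE) ∈ V := hz₀U
    rcases isOpen_pi_iff.mp hV _ hz₀V with ⟨F, u, hFu, hsub⟩
    set y : EE := fun p => h0 p + (z₀ : EE) p with hy
    set w : EE := fun p => if p ∈ F then y p else 0 with hw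
    have hwQ : w ∈ Qset := by
      apply Set.Finite.subset F.finite_toSet
      intro p hp
      by_contra hpF
      apply hp
      show w p = 0
      simp only [hw]
      rw [if_neg (fun h => hpF (Finset.mem_coe.mpr h))]
    have hwC : w ∉ C := by
      intro hwC
      have := (hS C hC).2
      exact absurd this (Set.Nonempty.ne_empty ⟨w, hwC, hwQ⟩)
    set z : EE := fun p => h0 p + w p with hz
    have hzK : z ∈ K := by
      intro p hp
      have h1 : h0 p = 0 := hh0 p hp
      have h2 : (z₀ : EE) p = 0 := z₀.2 p hp
      show h0 p + w p = 0
      by_cases hpF : p ∈ F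
      · simp only [hw, hy]
        rw [if_pos hpF, h1, h2, add_zero, add_zero]
      · simp only [hw]
        rw [if_neg hpF, h1, add_zero]
    have hzF : ∀ p ∈ F, z p = (z₀ : EE) p := by
      intro p hp
      show h0 p + w p = (z₀ : EE) p
      simp only [hw, hy]
      rw [if_pos hp, ← add_assoc, zmod2_add_self, zero_add]
    refine ⟨⟨z, hzK⟩, ?_, ?_⟩
    · show z ∈ V
      apply hsub
      rw [Set.mem_pi]
      intro p hp
      rw [hzF p (Finset.mem_coe.mp hp)]
      exact (hFu p (Finset.mem_coe.mp hp)).2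
    · show h0 + z ∉ C
      have : h0 + z = w := by
        funext p
        show h0 p + (h0 p + w p) = w p
        rw [← add_assoc, zmod2_add_self, zero_add]
      rw [this]
      exact hwC
  have open_avoid : ∀ h0 : EE, ∀ C ∈ S, IsOpen {z : K | h0 + (z : EE) ∉ C} := by
    intro h0 C hC
    have hcont : Continuous fun z : K => h0 + (z : EE) := by
      refine Continuous.comp ?_ continuous_subtype_val
      apply continuous_pi
      intro p
      exact (continuous_of_discreteTopology (α := ZMod 2)
        (f := fun a : ZMod 2 => h0 p + a)).comp (continuous_apply p)
    have : {z : K | h0 + (z : EE) ∉ C} = (fun z : K => h0 + (z : EE)) ⁻¹' Cᶜ := rfl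
    rw [this]
    exact (hS C hC).1.isOpen_compl.preimage hcont
  haveI : LocallyCompactSpace K := WeaklyLocallyCompactSpace.locallyCompactSpace
  haveI : BaireSpace K := BaireSpace.of_t2Space_locallyCompactSpace
  haveI : Countable S := hSc.to_subtype
  have hd : Dense (⋂ i : S × Bool,
      {z : K | (if i.2 then g else 0) + (z : EE) ∉ (i.1 : Set EE)}) := by
    apply dense_iInter_of_isOpen
    · intro i
      exact open_avoid _ _ i.1.2
    · intro i
      cases hb : i.2
      · simpa using dense_avoid 0 h0K _ i.1.2
      · simpa using dense_avoid g hgK _ i.1.2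
  obtain ⟨z, hzmem⟩ := hd.nonempty
  simp only [Set.mem_iInter] at hzmem
  have hzG : (z : EE) ∈ Gset := by
    intro j
    apply (hg j).subset
    intro i hi
    intro hgij
    exact hi (z.2 (i, j) hgij)
  refine ⟨z, hzG, add_mem_Gset hg hzG, ?_⟩
  intro C hC
  constructor
  · have := hzmem (⟨C, hC⟩, false)
    simpa using this
  · have := hzmem (⟨C, hC⟩, true)
    simpa using this

end Aux
noncomputable section Aux2

lemma zero_mem_Qset : (0 : EE) ∈ Qset := by
  have h : {p : ℕ × ℕ | (0 : EE) p ≠ 0} = ∅ := by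
    ext p
    simp
  show {p : ℕ × ℕ | (0 : EE) p ≠ 0}.Finite
  rw [h]
  exact Set.finite_empty

lemma countable_Iio_omega1 (i : (Cardinal.aleph 1).ord.ToType) : (Set.Iio i).Countable := by
  rw [← Set.countable_coe_iff, ← Cardinal.mk_le_aleph0_iff]
  have h3 := Cardinal.mk_Iio_ord_toType i
  have h4 : Cardinal.aleph 1 = Order.succ Cardinal.aleph0 := by
    rw [← Ordinal.succ_zero, Cardinal.aleph_succ, Cardinal.aleph_zero]
  exact Order.lt_succ_iff.mp (lt_of_lt_of_eq h3 h4)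

lemma countable_Iic_omega1 (i : (Cardinal.aleph 1).ord.ToType) : (Set.Iic i).Countable := by
  have h := (countable_Iio_omega1 i).insert i
  apply h.mono
  intro x (hx : x ≤ i)
  rcases eq_or_lt_of_le hx with h' | h'
  · exact Set.mem_insert_iff.mpr (Or.inl h')
  · exact Set.mem_insert_iff.mpr (Or.inr h')

/-- The closed sets missing `Qset`. -/
def CC : Set (Set EE) := {C : Set EE | IsClosed C ∧ C ∩ Qset = ∅}

lemma mk_EE : Cardinal.mk EE = 2 ^ Cardinal.aleph0 := by
  rw [Cardinal.mk_arrow]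
  have h1 : Cardinal.mk (ZMod 2) = 2 := by
    rw [Cardinal.mk_fintype]
    norm_num
  have h2 : Cardinal.mk (ℕ × ℕ) = Cardinal.aleph0 := Cardinal.mk_denumerable _
  rw [h1, h2, Cardinal.lift_id', Cardinal.lift_aleph0]

lemma mk_CC_le : Cardinal.mk ↥CC ≤ 2 ^ Cardinal.aleph0 := by
  classical
  obtain ⟨b, hbc, -, hb⟩ := TopologicalSpace.exists_countable_basis EE
  haveI : Countable ↥b := hbc.to_subtype
  have key : ∀ C D : ↥CC,
      {u : ↥b | (↑u : Set EE) ∩ ↑C = ∅} = {u : ↥b | (↑u : Set EE) ∩ ↑D = ∅} →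
      (↑C : Set EE) ⊆ (↑D : Set EE) := by
    intro C D h x hxC
    by_contra hxD
    have hxo : x ∈ ((↑D : Set EE)ᶜ) := hxD
    obtain ⟨v, hvb, hxv, hvsub⟩ :=
      hb.exists_subset_of_mem_open hxo (D.2.1.isOpen_compl)
    have hvD : (v : Set EE) ∩ ↑D = ∅ := by
      rw [Set.eq_empty_iff_forall_notMem]
      rintro y ⟨hy1, hy2⟩
      exact (hvsub hy1) hy2
    have hvC : (v : Set EE) ∩ ↑C = ∅ := by
      have : (⟨v, hvb⟩ : ↥b) ∈ {u : ↥b | (↑u : Set EE) ∩ ↑D = ∅} := hvD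
      rw [← h] at this
      exact this
    rw [Set.eq_empty_iff_forall_notMem] at hvC
    exact hvC x ⟨hxv, hxC⟩
  have hinj : Function.Injective (fun C : ↥CC => {u : ↥b | (↑u : Set EE) ∩ ↑C = ∅}) := by
    intro C D h
    exact Subtype.ext (le_antisymm (key C D h) (key D C h.symm))
  calc Cardinal.mk ↥CC ≤ Cardinal.mk (Set ↥b) := Cardinal.mk_le_of_injective hinj
    _ = 2 ^ Cardinal.mk ↥b := Cardinal.mk_set
    _ ≤ 2 ^ Cardinal.aleph0 := by
        apply Cardinal.power_le_power_left
        · norm_num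
        · exact Cardinal.mk_le_aleph0_iff.mpr inferInstance

end Aux2

/-- Under CH, the group `G` is generated by a subspace with the Menger property. -/
theorem stmt_11 (hCH : (2 : Cardinal) ^ Cardinal.aleph0 = Cardinal.aleph 1) :
    ∃ X : Set ((ℕ × ℕ) → ZMod 2), X ⊆ Gset ∧ MengerProp ↥X ∧ GeneratesG X := by
  classical
  have hCH0 : (2 : Cardinal.{0}) ^ Cardinal.aleph0 = Cardinal.aleph 1 := by
    apply Cardinal.lift_injective
    rw [Cardinal.lift_two_power, Cardinal.lift_aleph0, Cardinal.lift_aleph, Ordinal.lift_one]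
    exact hCH
  set I := (Cardinal.aleph 1).ord.ToType with hI
  haveI : Nonempty ↥Gset := ⟨⟨0, zero_mem_Gset⟩⟩
  have hmkI : Cardinal.mk I = Cardinal.aleph 1 := by
    rw [hI, Cardinal.mk_toType, Cardinal.card_ord]
  have hGle : Cardinal.mk ↥Gset ≤ Cardinal.mk I := by
    calc Cardinal.mk ↥Gset ≤ Cardinal.mk EE := Cardinal.mk_set_le _
      _ = 2 ^ Cardinal.aleph0 := mk_EE
      _ = Cardinal.aleph 1 := hCH0
      _ = Cardinal.mk I := hmkI.symm
  obtain ⟨fG⟩ := (Cardinal.le_def _ _).mp hGle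
  set eG : I → ↥Gset := Function.invFun fG with heGdef
  have heG : Function.Surjective eG := Function.invFun_surjective fG.injective
  have hCCle : Cardinal.mk ↥CC ≤ Cardinal.mk I := by
    calc Cardinal.mk ↥CC ≤ 2 ^ Cardinal.aleph0 := mk_CC_le
      _ = Cardinal.aleph 1 := hCH0
      _ = Cardinal.mk I := hmkI.symm
  obtain ⟨iC⟩ := (Cardinal.le_def _ _).mp hCCle
  -- choose the points zᵢ by the Baire category lemma
  have hz : ∀ i : I, ∃ z : EE, z ∈ Gset ∧ ((eG i : EE) + z) ∈ Gset ∧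
      ∀ c : ↥CC, iC c ≤ i → z ∉ (c : Set EE) ∧ ((eG i : EE) + z) ∉ (c : Set EE) := by
    intro i
    have hSc : ((fun c : ↥CC => (c : Set EE)) '' {c | iC c ≤ i}).Countable := by
      apply Set.Countable.image
      have hsub : {c : ↥CC | iC c ≤ i} ⊆ iC ⁻¹' (Set.Iic i) := fun c hc => hc
      exact (((countable_Iic_omega1 i)).preimage iC.injective).mono hsub
    obtain ⟨z, h1, h2, h3⟩ := core_avoid (eG i : EE) (eG i).2 _ hSc
      (by rintro C ⟨c, -, rfl⟩; exact c.2)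
    exact ⟨z, h1, h2, fun c hc => h3 _ ⟨c, hc, rfl⟩⟩
  choose Z hZ1 hZ2 hZ3 using hz
  set Y : Set EE := ⋃ i : I, ({Z i, (eG i : EE) + Z i} : Set EE) with hY
  set X : Set EE := Qset ∪ Y with hX
  have hQX : Qset ⊆ X := Set.subset_union_left
  have h0X : (0 : EE) ∈ X := hQX zero_mem_Qset
  have hXG : X ⊆ Gset := by
    rintro x (hx | hx)
    · exact Qset_subset_Gset hx
    · rcases Set.mem_iUnion.mp hx with ⟨i, hi⟩
      rcases Set.mem_insert_iff.mp hi with rfl | hi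
      · exact hZ1 i
      · rw [Set.mem_singleton_iff] at hi
        subst hi
        exact hZ2 i
  -- concentration of X on Qset
  have conc : ∀ W : Set EE, IsOpen W → Qset ⊆ W → (X \ W).Countable := by
    intro W hWo hQW
    have hCc : Wᶜ ∈ CC := by
      refine ⟨hWo.isClosed_compl, ?_⟩
      rw [Set.eq_empty_iff_forall_notMem]
      rintro x ⟨hx1, hx2⟩
      exact hx1 (hQW hx2)
    set c : ↥CC := ⟨Wᶜ, hCc⟩ with hc
    have hsub : X \ W ⊆ (Z '' (Set.Iio (iC c))) ∪
        ((fun i => (eG i : EE) + Z i) '' (Set.Iio (iC c))) := by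
      rintro x ⟨hxX, hxW⟩
      have hxc : x ∈ (c : Set EE) := hxW
      rcases hxX with hQ | hYm
      · exact absurd (hQW hQ) hxW
      · rcases Set.mem_iUnion.mp hYm with ⟨i, hi⟩
        rcases Set.mem_insert_iff.mp hi with rfl | hi
        · left
          refine ⟨i, ?_, rfl⟩
          by_contra hle
          rw [Set.mem_Iio, not_lt] at hle
          exact (hZ3 i c hle).1 hxc
        · rw [Set.mem_singleton_iff] at hi
          subst hi
          right
          refine ⟨i, ?_, rfl⟩
          by_contra hle
          rw [Set.mem_Iio, not_lt] at hle
          exact (hZ3 i c hle).2 hxc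
    exact (((countable_Iio_omega1 _).image _).union
      ((countable_Iio_omega1 _).image _)).mono hsub
  refine ⟨X, hXG, ?_, ?_⟩
  · -- Menger property
    intro cov hcov
    have hQsubC : {x : ↥X | (x : EE) ∈ Qset}.Countable :=
      (Qset_countable.preimage Subtype.val_injective)
    have hQsubN : {x : ↥X | (x : EE) ∈ Qset}.Nonempty :=
      ⟨⟨0, h0X⟩, zero_mem_Qset⟩
    obtain ⟨q, hq⟩ := hQsubC.exists_eq_range hQsubN
    -- pick sets from even covers containing the q's
    have hUex : ∀ n : ℕ, ∃ U, U ∈ cov (2*n) ∧ q n ∈ U := by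
      intro n
      have h1 : (q n : ↥X) ∈ ⋃₀ cov (2*n) := by
        rw [(hcov (2*n)).2]; trivial
      rcases h1 with ⟨U, hU1, hU2⟩
      exact ⟨U, hU1, hU2⟩
    choose U hUc hUq using hUex
    have hUo : ∀ n, ∃ V : Set EE, IsOpen V ∧ Subtype.val ⁻¹' V = U n := by
      intro n
      exact isOpen_induced_iff.mp ((hcov (2*n)).1 _ (hUc n))
    choose V hVo hVU using hUo
    set W : Set EE := ⋃ n, V n with hW
    have hWo : IsOpen W := isOpen_iUnion hVo
    have hQW : Qset ⊆ W := by
      intro x hx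
      have hx2 : (⟨x, hQX hx⟩ : ↥X) ∈ {x : ↥X | (x : EE) ∈ Qset} := hx
      rw [hq] at hx2
      rcases hx2 with ⟨n, hn⟩
      have h3 : q n ∈ U n := hUq n
      rw [hn, ← hVU n] at h3
      exact Set.mem_iUnion.mpr ⟨n, h3⟩
    have hTc : {x : ↥X | (x : EE) ∉ W}.Countable := by
      have h1 : {x : ↥X | (x : EE) ∉ W} ⊆ Subtype.val ⁻¹' (X \ W) :=
        fun x hx => ⟨x.2, hx⟩
      exact ((conc W hWo hQW).preimage Subtype.val_injective).mono h1
    have hTr : ∃ r : ℕ → ↥X, {x : ↥X | (x : EE) ∉ W} ⊆ Set.range r := by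
      rcases Set.eq_empty_or_nonempty {x : ↥X | (x : EE) ∉ W} with hT | hT
      · exact ⟨fun _ => ⟨0, h0X⟩, by rw [hT]; exact Set.empty_subset _⟩
      · obtain ⟨r, hr⟩ := hTc.exists_eq_range hT
        exact ⟨r, hr.le⟩
    obtain ⟨r, hr⟩ := hTr
    have hU'ex : ∀ n : ℕ, ∃ U, U ∈ cov (2*n+1) ∧ r n ∈ U := by
      intro n
      have h1 : (r n : ↥X) ∈ ⋃₀ cov (2*n+1) := by
        rw [(hcov (2*n+1)).2]; trivial
      rcases h1 with ⟨U, hU1, hU2⟩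
      exact ⟨U, hU1, hU2⟩
    choose U' hU'c hU'q using hU'ex
    refine ⟨fun m => if m % 2 = 0 then {U (m/2)} else {U' (m/2)}, ?_, ?_⟩
    · intro m
      dsimp only
      by_cases hm : m % 2 = 0
      · rw [if_pos hm]
        refine ⟨?_, Set.finite_singleton _⟩
        intro s hs
        rw [Set.mem_singleton_iff] at hs
        subst hs
        have h3 := hUc (m/2)
        have h2 : 2 * (m/2) = m := by omega
        rw [h2] at h3
        exact h3
      · rw [if_neg hm]
        refine ⟨?_, Set.finite_singleton _⟩
        intro s hs
        rw [Set.mem_singleton_iff] at hs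
        subst hs
        have h3 := hU'c (m/2)
        have h2 : 2 * (m/2) + 1 = m := by omega
        rw [h2] at h3
        exact h3
    · intro x
      by_cases hxW : (x : EE) ∈ W
      · rcases Set.mem_iUnion.mp hxW with ⟨n, hn⟩
        refine ⟨2*n, ?_⟩
        show x ∈ ⋃₀ (if (2*n) % 2 = 0 then ({U ((2*n)/2)} : Set (Set ↥X)) else {U' ((2*n)/2)})
        have hm : (2*n) % 2 = 0 := by omega
        have hd : (2*n)/2 = n := by omega
        rw [if_pos hm, hd]
        refine ⟨U n, Set.mem_singleton _, ?_⟩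
        rw [← hVU n]
        exact hn
      · have hx2 : x ∈ Set.range r := hr hxW
        rcases hx2 with ⟨n, rfl⟩
        refine ⟨2*n+1, ?_⟩
        show r n ∈ ⋃₀ (if (2*n+1) % 2 = 0 then ({U ((2*n+1)/2)} : Set (Set ↥X)) else {U' ((2*n+1)/2)})
        have hm : ¬ ((2*n+1) % 2 = 0) := by omega
        have hd : (2*n+1)/2 = n := by omega
        rw [if_neg hm, hd]
        exact ⟨U' n, Set.mem_singleton _, hU'q n⟩
  · -- generation
    intro g hg
    obtain ⟨i, hi⟩ := heG ⟨g, hg⟩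
    have hgi : (eG i : EE) = g := by rw [hi]
    refine ⟨[Z i, (eG i : EE) + Z i], ?_, ?_⟩
    · intro a ha
      rcases List.mem_cons.mp ha with rfl | ha
      · exact Or.inr (Set.mem_iUnion.mpr ⟨i, Set.mem_insert _ _⟩)
      · rcases List.mem_cons.mp ha with rfl | ha
        · exact Or.inr (Set.mem_iUnion.mpr ⟨i,
            Set.mem_insert_iff.mpr (Or.inr (Set.mem_singleton _))⟩)
        · exact absurd ha List.not_mem_nil
    · show Z i + ((eG i : EE) + Z i + 0) = g
      rw [hgi, add_zero, add_comm g (Z i), ← add_assoc, EE_add_self, zero_add]
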